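/- Let G be a finite group, (H1,H2,H3,H4) an Ingleton offender in G, and N a normal subgroup of G with N ≤ H2. Then (NH1, H2, H3, H4) is also an Ingleton offender, where NH1 is the subgroup product of N and H1. -/

import Mathlib

private lemma card_eq_mul_relindex {G : Type*} [Group G] [Finite G] {A B : Subgroup G}
    (h : A ≤ B) : Nat.card B = Nat.card A * A.relIndex B := by
  rw [← Subgroup.card_mul_index (A.subgroupOf B),
    Nat.card_congr (Subgroup.subgroupOfEquivOfLe h).toEquiv]
  rfl

private lemma dedekind_inf {G : Type*} [Group G] (N H K : Subgroup G) [N.Normal]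
    (h : N ≤ K) : (N ⊔ H) ⊓ K = N ⊔ (H ⊓ K) := by
  apply SetLike.coe_injective
  rw [Subgroup.coe_inf, Subgroup.normal_mul, Subgroup.normal_mul,
    Subgroup.mul_inf_assoc N H K h]

private lemma relindex_pos {G : Type*} [Group G] [Finite G] (A B : Subgroup G) :
    0 < A.relIndex B :=
  Nat.pos_of_ne_zero (Subgroup.index_ne_zero_of_finite)

theorem stmt16 {G : Type*} [Group G] [Finite G] (H1 H2 H3 H4 N : Subgroup G)
    [N.Normal] (hN : N ≤ H2)
    (hoff : Nat.card (H1 : Subgroup G) * Nat.card (H2 : Subgroup G) * Nat.card (H3 ⊓ H4 : Subgroup G) * Nat.card (H1 ⊓ H2 ⊓ H3 : Subgroup G) * Nat.card (H1 ⊓ H2 ⊓ H4 : Subgroup G) < Nat.card (H1 ⊓ H2 : Subgroup G) * Nat.card (H1 ⊓ H3 : Subgroup G) * Nat.card (H1 ⊓ H4 : Subgroup G) * Nat.card (H2 ⊓ H3 : Subgroup G) * Nat.card (H2 ⊓ H4 : Subgroup G)) :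
    Nat.card ((N ⊔ H1) : Subgroup G) * Nat.card (H2 : Subgroup G) * Nat.card (H3 ⊓ H4 : Subgroup G) * Nat.card ((N ⊔ H1) ⊓ H2 ⊓ H3 : Subgroup G) * Nat.card ((N ⊔ H1) ⊓ H2 ⊓ H4 : Subgroup G) < Nat.card ((N ⊔ H1) ⊓ H2 : Subgroup G) * Nat.card ((N ⊔ H1) ⊓ H3 : Subgroup G) * Nat.card ((N ⊔ H1) ⊓ H4 : Subgroup G) * Nat.card (H2 ⊓ H3 : Subgroup G) * Nat.card (H2 ⊓ H4 : Subgroup G) := by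
  set K := N ⊔ H1 with hKdef
  have hH1K : H1 ≤ K := le_sup_right
  -- abbreviations for relindexes
  set r1 := N.relIndex H1 with hr1
  set r12 := N.relIndex (H1 ⊓ H2) with hr12
  set t3 := (H1 ⊓ H2 ⊓ H3).relIndex (K ⊓ H2 ⊓ H3) with ht3
  set t4 := (H1 ⊓ H2 ⊓ H4).relIndex (K ⊓ H2 ⊓ H4) with ht4
  set s3 := (H1 ⊓ H3).relIndex (K ⊓ H3) with hs3
  set s4 := (H1 ⊓ H4).relIndex (K ⊓ H4) with hs4
  -- cardinalities of sups with N
  have hK : Nat.card K = Nat.card N * r1 := by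
    rw [card_eq_mul_relindex (le_sup_left : N ≤ K), hr1, Subgroup.relIndex_sup_left]
  have hc1 : Nat.card H1 = Nat.card ((N ⊓ H1 : Subgroup G)) * r1 := by
    rw [card_eq_mul_relindex (inf_le_right : N ⊓ H1 ≤ H1), Subgroup.inf_relIndex_right, hr1]
  have hded : K ⊓ H2 = N ⊔ (H1 ⊓ H2) := dedekind_inf N H1 H2 hN
  have hK2 : Nat.card ((K ⊓ H2 : Subgroup G)) = Nat.card N * r12 := by
    rw [hded, card_eq_mul_relindex (le_sup_left : N ≤ N ⊔ (H1 ⊓ H2)),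
      Subgroup.relIndex_sup_left]
  have hNH12 : N ⊓ (H1 ⊓ H2) = N ⊓ H1 := by
    rw [← inf_assoc]
    exact inf_eq_left.mpr (le_trans inf_le_left hN)
  have hc12 : Nat.card ((H1 ⊓ H2 : Subgroup G)) = Nat.card ((N ⊓ H1 : Subgroup G)) * r12 := by
    rw [card_eq_mul_relindex (inf_le_right : N ⊓ (H1 ⊓ H2) ≤ H1 ⊓ H2),
      Subgroup.inf_relIndex_right, hNH12, hr12]
  -- 3-fold intersections
  have hle23 : H1 ⊓ H2 ⊓ H3 ≤ K ⊓ H2 ⊓ H3 :=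
    inf_le_inf_right H3 (inf_le_inf_right H2 hH1K)
  have hle24 : H1 ⊓ H2 ⊓ H4 ≤ K ⊓ H2 ⊓ H4 :=
    inf_le_inf_right H4 (inf_le_inf_right H2 hH1K)
  have hK23 : Nat.card ((K ⊓ H2 ⊓ H3 : Subgroup G)) = Nat.card ((H1 ⊓ H2 ⊓ H3 : Subgroup G)) * t3 :=
    card_eq_mul_relindex hle23
  have hK24 : Nat.card ((K ⊓ H2 ⊓ H4 : Subgroup G)) = Nat.card ((H1 ⊓ H2 ⊓ H4 : Subgroup G)) * t4 :=
    card_eq_mul_relindex hle24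
  have hK3 : Nat.card ((K ⊓ H3 : Subgroup G)) = Nat.card ((H1 ⊓ H3 : Subgroup G)) * s3 :=
    card_eq_mul_relindex (inf_le_inf_right H3 hH1K)
  have hK4 : Nat.card ((K ⊓ H4 : Subgroup G)) = Nat.card ((H1 ⊓ H4 : Subgroup G)) * s4 :=
    card_eq_mul_relindex (inf_le_inf_right H4 hH1K)
  -- key comparison t ≤ s
  have hkey : ∀ (A : Subgroup G), (H1 ⊓ H2 ⊓ A).relIndex (K ⊓ H2 ⊓ A) ≤
      (H1 ⊓ A).relIndex (K ⊓ A) := by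
    intro A
    have hident : (H1 ⊓ A) ⊓ (K ⊓ H2 ⊓ A) = H1 ⊓ H2 ⊓ A := by
      ext x
      simp only [Subgroup.mem_inf]
      constructor
      · rintro ⟨⟨a, b⟩, ⟨c, d⟩, e⟩; exact ⟨⟨a, d⟩, b⟩
      · rintro ⟨⟨a, b⟩, c⟩; exact ⟨⟨a, c⟩, ⟨hH1K a, b⟩, c⟩
    rw [← hident, Subgroup.inf_relIndex_right]
    exact Subgroup.relIndex_le_of_le_right (inf_le_inf_right A inf_le_left)
      (relindex_pos _ _).ne'
  have ht3s3 : t3 ≤ s3 := hkey H3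
  have ht4s4 : t4 ≤ s4 := hkey H4
  have hpos : 0 < Nat.card N * t3 * t4 :=
    Nat.mul_pos (Nat.mul_pos Nat.card_pos (relindex_pos _ _)) (relindex_pos _ _)
  apply Nat.lt_of_mul_lt_mul_left (a := Nat.card ((N ⊓ H1 : Subgroup G)))
  calc Nat.card ((N ⊓ H1 : Subgroup G)) *
        (Nat.card K * Nat.card H2 * Nat.card ((H3 ⊓ H4 : Subgroup G)) *
          Nat.card ((K ⊓ H2 ⊓ H3 : Subgroup G)) * Nat.card ((K ⊓ H2 ⊓ H4 : Subgroup G)))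
      = (Nat.card N * t3 * t4) *
        (Nat.card H1 * Nat.card H2 * Nat.card ((H3 ⊓ H4 : Subgroup G)) *
          Nat.card ((H1 ⊓ H2 ⊓ H3 : Subgroup G)) * Nat.card ((H1 ⊓ H2 ⊓ H4 : Subgroup G))) := by
        rw [hK, hK23, hK24, hc1]; ring
    _ < (Nat.card N * t3 * t4) *
        (Nat.card ((H1 ⊓ H2 : Subgroup G)) * Nat.card ((H1 ⊓ H3 : Subgroup G)) *
          Nat.card ((H1 ⊓ H4 : Subgroup G)) * Nat.card ((H2 ⊓ H3 : Subgroup G)) *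
          Nat.card ((H2 ⊓ H4 : Subgroup G))) := by
        exact mul_lt_mul_of_pos_left hoff hpos
    _ = Nat.card ((N ⊓ H1 : Subgroup G)) *
        (Nat.card ((K ⊓ H2 : Subgroup G)) * (Nat.card ((H1 ⊓ H3 : Subgroup G)) * t3) *
          (Nat.card ((H1 ⊓ H4 : Subgroup G)) * t4) * Nat.card ((H2 ⊓ H3 : Subgroup G)) *
          Nat.card ((H2 ⊓ H4 : Subgroup G))) := by
        rw [hK2, hc12]; ring
    _ ≤ Nat.card ((N ⊓ H1 : Subgroup G)) *
        (Nat.card ((K ⊓ H2 : Subgroup G)) * Nat.card ((K ⊓ H3 : Subgroup G)) *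
          Nat.card ((K ⊓ H4 : Subgroup G)) * Nat.card ((H2 ⊓ H3 : Subgroup G)) *
          Nat.card ((H2 ⊓ H4 : Subgroup G))) := by
        rw [hK3, hK4]
        gcongr
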